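/- arXiv:2307.09214 — 2 statements merged into one kernel-verified Lean document; each statement's English description precedes it below -/
import Mathlib

section
/- There is a constant C > 0 such that for every d ≥ 1 and every finite connected G ⊆ ℤ^d, there exists an agent algorithm with sensing range V = 1, at most C · diam(G) · log₂(2d) bits of memory, and steps of Manhattan norm at most 1 (the agent may stay in place), that patrols G. -/
open Finset

/-- Manhattan (ℓ¹) norm of an integer vector. -/
def manhattan {d : ℕ} (p : Fin d → ℤ) : ℤ := ∑ i, |p i|

/-- The grid graph vertex set `[n 0] × ⋯ × [n (d-1)]`. -/
def grid {d : ℕ} (n : Fin d → ℕ) : Set (Fin d → ℤ) :=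
  {p | ∀ i, 1 ≤ p i ∧ p i ≤ (n i : ℤ)}

/-- Sensing data `S_V(p)`: relative positions of points of `D` within
Manhattan distance `V` of `p`. -/
def sense {d : ℕ} (D : Set (Fin d → ℤ)) (V : ℕ) (p : Fin d → ℤ) : Set (Fin d → ℤ) :=
  {q | p + q ∈ D ∧ manhattan q ≤ (V : ℤ)}

/-- A deterministic agent algorithm with `b` bits of memory: maps sensing data and a
memory state to a step and a new memory state. -/
structure Agent (d b : ℕ) where
  act : Set (Fin d → ℤ) → (Fin b → Bool) → (Fin d → ℤ) × (Fin b → Bool)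

namespace Agent

/-- Validity: at every vertex of `D`, in every memory state, the chosen step is a
unit step leading to a vertex of `D`. -/
def Valid {d b : ℕ} (A : Agent d b) (D : Set (Fin d → ℤ)) (V : ℕ) : Prop :=
  ∀ p ∈ D, ∀ m, manhattan (A.act (sense D V p) m).1 = 1 ∧
    (A.act (sense D V p) m).1 ∈ sense D V p

/-- The trajectory (position, memory) of the agent after `t` steps, starting from
position `v` and memory state `m`. -/
def traj {d b : ℕ} (A : Agent d b) (D : Set (Fin d → ℤ)) (V : ℕ)
    (v : Fin d → ℤ) (m : Fin b → Bool) : ℕ → (Fin d → ℤ) × (Fin b → Bool)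
  | 0 => (v, m)
  | t + 1 =>
      let s := Agent.traj A D V v m t
      (s.1 + (A.act (sense D V s.1) s.2).1, (A.act (sense D V s.1) s.2).2)

/-- The agent patrols `D`: it is valid, and from any initial position in `D` and any
initial memory state, its trajectory visits every vertex of `D` within finitely many
steps. -/
def Patrols {d b : ℕ} (A : Agent d b) (D : Set (Fin d → ℤ)) (V : ℕ) : Prop :=
  A.Valid D V ∧ ∀ v₁ ∈ D, ∀ m, ∀ v ∈ D, ∃ t, (A.traj D V v₁ m t).1 = v

end Agent

/-- The graph on a set of integer vectors with edges between points at Manhattan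
distance 1. -/
def latticeGraph {d : ℕ} (S : Set (Fin d → ℤ)) : SimpleGraph S where
  Adj p q := manhattan (p.1 - q.1) = 1
  symm := by
    constructor
    intro p q h
    simp only [manhattan, Pi.sub_apply] at h ⊢
    simpa [abs_sub_comm] using h
  loopless := by
    constructor
    intro p h
    simp [manhattan] at h

/-- The `d`-dimensional grid graph `[n 0] × ⋯ × [n (d-1)]`. -/
def gridGraph {d : ℕ} (n : Fin d → ℕ) : SimpleGraph (grid n) :=
  latticeGraph (grid n)

namespace Agent

/-- Lazy validity: at every vertex of `D`, in every memory state, the chosen step has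
Manhattan norm at most 1 (the agent may stay in place) and leads to a vertex of `D`. -/
def ValidLazy {d b : ℕ} (A : Agent d b) (D : Set (Fin d → ℤ)) (V : ℕ) : Prop :=
  ∀ p ∈ D, ∀ m, manhattan (A.act (sense D V p) m).1 ≤ 1 ∧
    p + (A.act (sense D V p) m).1 ∈ D

/-- The lazy agent patrols `D`: it is lazily valid, and from any initial position in
`D` and any initial memory state its trajectory visits every vertex of `D` within
finitely many steps. -/
def PatrolsLazy {d b : ℕ} (A : Agent d b) (D : Set (Fin d → ℤ)) (V : ℕ) : Prop :=
  A.ValidLazy D V ∧ ∀ v₁ ∈ D, ∀ m, ∀ v ∈ D, ∃ t, (A.traj D V v₁ m t).1 = v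

end Agent

section AuxLemmas

variable {d : ℕ}

lemma manhattan_nonneg (p : Fin d → ℤ) : 0 ≤ manhattan p :=
  Finset.sum_nonneg fun i _ => abs_nonneg _

lemma manhattan_zero : manhattan (0 : Fin d → ℤ) = 0 := by
  simp [manhattan]

lemma manhattan_sub_comm (p q : Fin d → ℤ) : manhattan (p - q) = manhattan (q - p) := by
  simp only [manhattan, Pi.sub_apply]
  exact Finset.sum_congr rfl fun i _ => abs_sub_comm _ _

/-- Unit-ball classification. -/
lemma exists_dec_of_manhattan_le_one {s : Fin d → ℤ} (h : manhattan s ≤ 1) :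
    s = 0 ∨ ∃ i : Fin d, s = Pi.single i 1 ∨ s = Pi.single i (-1) := by
  by_cases h0 : s = 0
  · exact Or.inl h0
  · right
    have : ∃ i, s i ≠ 0 := by
      by_contra hc
      push_neg at hc
      exact h0 (funext fun i => hc i)
    obtain ⟨i, hi⟩ := this
    have h1 : (1 : ℤ) ≤ |s i| := Int.one_le_abs (by simpa using hi)
    have hle : |s i| ≤ manhattan s :=
      Finset.single_le_sum (fun j _ => abs_nonneg (s j)) (Finset.mem_univ i)
    have habs : |s i| = 1 := le_antisymm (hle.trans h) h1
    have hrest : ∀ j, j ≠ i → s j = 0 := by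
      intro j hj
      have hsum : manhattan s = |s i| + ∑ k ∈ Finset.univ.erase i, |s k| := by
        rw [manhattan, ← Finset.add_sum_erase _ _ (Finset.mem_univ i)]
      have hz : ∑ k ∈ Finset.univ.erase i, |s k| ≤ 0 := by omega
      have hz' : ∀ k ∈ Finset.univ.erase i, |s k| = 0 := by
        intro k hk
        have hnn : ∀ k ∈ Finset.univ.erase i, (0:ℤ) ≤ |s k| := fun k _ => abs_nonneg _
        have := Finset.sum_nonneg hnn
        have hle' : |s k| ≤ ∑ k ∈ Finset.univ.erase i, |s k| :=
          Finset.single_le_sum hnn hk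
        have hle0 : |s k| ≤ 0 := le_trans hle' hz
        exact le_antisymm hle0 (abs_nonneg _)
      have := hz' j (Finset.mem_erase.mpr ⟨hj, Finset.mem_univ j⟩)
      exact abs_eq_zero.mp this
    refine ⟨i, ?_⟩
    have hsi : s i = 1 ∨ s i = -1 := by
      rcases abs_eq (by norm_num : (0:ℤ) ≤ 1) |>.mp habs with h' | h'
      · exact Or.inl h'
      · exact Or.inr h'
    rcases hsi with h' | h'
    · left
      funext j
      by_cases hji : j = i
      · subst hji; simp [h']
      · simp [Pi.single_apply, hji, hrest j hji]
    · right
      funext j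
      by_cases hji : j = i
      · subst hji; simp [h']
      · simp [Pi.single_apply, hji, hrest j hji]

lemma zmod_val_sub_one {L : ℕ} [NeZero L] (i : ZMod L) (h : i ≠ 0) :
    (i - 1).val = i.val - 1 := by
  have h1 : 1 ≤ i.val := Nat.one_le_iff_ne_zero.mpr (fun hc => h ((ZMod.val_eq_zero i).mp hc))
  have hlt : i.val - 1 < L := lt_of_le_of_lt (Nat.sub_le _ _) (ZMod.val_lt i)
  have key : ((i.val - 1 : ℕ) : ZMod L) = i - 1 := by
    have hi : ((i.val : ℕ) : ZMod L) = i := ZMod.natCast_rightInverse i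
    push_cast [h1]
    rw [hi]
  rw [← key, ZMod.val_cast_of_lt hlt]

/-- A finite set in `ℤ^d` has no nonzero translation into itself. -/
lemma shift_eq_zero {G : Set (Fin d → ℤ)} (hfin : G.Finite) (hne : G.Nonempty)
    {v : Fin d → ℤ} (hv : ∀ g ∈ G, g + v ∈ G) : v = 0 := by
  classical
  let F := hfin.toFinset
  have hFne : F.Nonempty := by simpa [F] using hne
  have hmap : ∀ g ∈ F, g + v ∈ F := by
    intro g hg
    simp only [F, Set.Finite.mem_toFinset] at hg ⊢
    exact hv g hg
  have hinj : ∀ x ∈ F, ∀ y ∈ F, x + v = y + v → x = y := by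
    intro x _ y _ hxy
    exact add_right_cancel hxy
  have himg : F.image (· + v) = F := by
    apply Finset.eq_of_subset_of_card_le
    · intro x hx
      obtain ⟨g, hg, rfl⟩ := Finset.mem_image.mp hx
      exact hmap g hg
    · rw [Finset.card_image_of_injOn hinj]
  funext j
  have h2 : ∑ x ∈ F.image (· + v), x j = ∑ x ∈ F, (x + v) j :=
    Finset.sum_image hinj
  rw [himg] at h2
  have hsum : ∑ g ∈ F, (g j + v j) = ∑ g ∈ F, g j := by
    calc ∑ g ∈ F, (g j + v j) = ∑ x ∈ F, (x + v) j :=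
          Finset.sum_congr rfl fun g _ => by simp
      _ = ∑ g ∈ F, g j := h2.symm
  rw [Finset.sum_add_distrib, Finset.sum_const, nsmul_eq_mul] at hsum
  have hcard : (0:ℤ) < (F.card : ℤ) := by
    exact_mod_cast Finset.card_pos.mpr hFne
  have hz : (F.card : ℤ) * v j = 0 := by linarith
  simp only [Pi.zero_apply]
  rcases mul_eq_zero.mp hz with h' | h'
  · exact absurd h' (by linarith)
  · exact h'

end AuxLemmas
section Machine

open scoped Classical

variable {d : ℕ}

/-- One step of the patrolling machine: memory is `(r, n, mode)` where `r` is the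
hypothesized tour index of the base, `n` the progress counter, and `mode` is
`true` for probing, `false` for backtracking. -/
noncomputable def mstep (G : Set (Fin d → ℤ)) {L : ℕ} (w : ZMod L → (Fin d → ℤ))
    (S : Set (Fin d → ℤ)) : ZMod L × ZMod L × Bool → (Fin d → ℤ) × (ZMod L × ZMod L × Bool)
  | (r, n, true) =>
      if S = sense G 1 (w (r + n)) then (w (r + n + 1) - w (r + n), (r, n + 1, true))
      else (0, (r, n, false))
  | (r, i, false) =>
      if i = 0 then (0, (r + 1, 0, true))
      else if (w (r + i - 1) - w (r + i)) ∈ S then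
        (w (r + i - 1) - w (r + i), (r, i - 1, false))
      else (0, (r + 1, 0, true))

/-- The orbit of the machine (position and memory). -/
noncomputable def morb (G : Set (Fin d → ℤ)) {L : ℕ} (w : ZMod L → (Fin d → ℤ))
    (z : (Fin d → ℤ) × (ZMod L × ZMod L × Bool)) :
    ℕ → (Fin d → ℤ) × (ZMod L × ZMod L × Bool)
  | 0 => z
  | t + 1 =>
      let y := morb G w z t
      (y.1 + (mstep G w (sense G 1 y.1) y.2).1, (mstep G w (sense G 1 y.1) y.2).2)

/-- The orbit covers `G`. -/
def MCov (G : Set (Fin d → ℤ)) {L : ℕ} (w : ZMod L → (Fin d → ℤ))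
    (z : (Fin d → ℤ) × (ZMod L × ZMod L × Bool)) : Prop :=
  ∀ g ∈ G, ∃ t, (morb G w z t).1 = g

variable {G : Set (Fin d → ℤ)} {L : ℕ} [NeZero L] {w : ZMod L → (Fin d → ℤ)}

lemma morb_add (z : (Fin d → ℤ) × (ZMod L × ZMod L × Bool)) (a b : ℕ) :
    morb G w z (a + b) = morb G w (morb G w z a) b := by
  induction b with
  | zero => rfl
  | succ b ih => rw [← Nat.add_assoc]; simp only [morb, ih]

lemma mcov_of_reach {z z' : (Fin d → ℤ) × (ZMod L × ZMod L × Bool)} {T : ℕ}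
    (h : morb G w z T = z') (hc : MCov G w z') : MCov G w z := by
  intro g hg
  obtain ⟨t, ht⟩ := hc g hg
  exact ⟨T + t, by rw [morb_add, h]; exact ht⟩

section WithTour

variable (hwG : ∀ k, w k ∈ G) (hadj : ∀ k, manhattan (w (k + 1) - w k) ≤ 1)

include hwG hadj

lemma mstep_valid (p : Fin d → ℤ) (hp : p ∈ G) (σ : ZMod L × ZMod L × Bool) :
    manhattan (mstep G w (sense G 1 p) σ).1 ≤ 1 ∧
      p + (mstep G w (sense G 1 p) σ).1 ∈ G := by
  obtain ⟨r, n, mode⟩ := σ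
  have h0 : manhattan (0 : Fin d → ℤ) ≤ 1 := by rw [manhattan_zero]; norm_num
  have hp0 : p + 0 ∈ G := by simpa using hp
  cases mode with
  | true =>
      by_cases h : sense G 1 p = sense G 1 (w (r + n))
      · have hs : (w (r + n + 1) - w (r + n)) ∈ sense G 1 (w (r + n)) := by
          constructor
          · show w (r + n) + (w (r + n + 1) - w (r + n)) ∈ G
            have : w (r + n) + (w (r + n + 1) - w (r + n)) = w (r + n + 1) := by abel
            rw [this]; exact hwG _
          · simpa using hadj (r + n)
        rw [← h] at hs
        simp only [mstep, if_pos h]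
        refine ⟨by simpa using hadj (r + n), hs.1⟩
      · simp only [mstep, if_neg h]
        exact ⟨h0, hp0⟩
  | false =>
      by_cases hn : n = 0
      · simp only [mstep, if_pos hn]
        exact ⟨h0, hp0⟩
      · by_cases hmem : (w (r + n - 1) - w (r + n)) ∈ sense G 1 p
        · simp only [mstep, if_neg hn, if_pos hmem]
          exact ⟨hmem.2, hmem.1⟩
        · simp only [mstep, if_neg hn, if_neg hmem]
          exact ⟨h0, hp0⟩

lemma morb_mem (z : (Fin d → ℤ) × (ZMod L × ZMod L × Bool)) (hz : z.1 ∈ G) (t : ℕ) :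
    (morb G w z t).1 ∈ G := by
  induction t with
  | zero => exact hz
  | succ t ih =>
      exact (mstep_valid hwG hadj _ ih _).2

end WithTour

end Machine
section MachineMain

open scoped Classical

variable {d : ℕ} {G : Set (Fin d → ℤ)} {L : ℕ} [NeZero L] {w : ZMod L → (Fin d → ℤ)}

variable (hwG : ∀ k, w k ∈ G) (hadj : ∀ k, manhattan (w (k + 1) - w k) ≤ 1)

/-- While the sensed data matches the tour, the machine follows the tour in parallel. -/
lemma matched_prefix (p : Fin d → ℤ) (r n : ZMod L) (t : ℕ)
    (h : ∀ t' : ℕ, t' < t → sense G 1 (p + w (r + n + (t' : ZMod L)) - w (r + n))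
        = sense G 1 (w (r + n + (t' : ZMod L)))) :
    morb G w (p, (r, n, true)) t
      = (p + w (r + n + (t : ZMod L)) - w (r + n), (r, n + (t : ZMod L), true)) := by
  induction t with
  | zero =>
      show (p, (r, n, true)) = _
      simp
  | succ t ih =>
      have ihh := ih (fun t' ht' => h t' (Nat.lt_succ_of_lt ht'))
      have hmt := h t (Nat.lt_succ_self t)
      show (let y := morb G w (p, (r, n, true)) t;
        (y.1 + (mstep G w (sense G 1 y.1) y.2).1, (mstep G w (sense G 1 y.1) y.2).2)) = _
      rw [ihh]
      have hcond : sense G 1 (p + w (r + n + (t : ZMod L)) - w (r + n))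
          = sense G 1 (w (r + (n + (t : ZMod L)))) := by
        rw [← add_assoc]; exact hmt
      simp only [mstep, if_pos hcond]
      have h1 : r + (n + (t : ZMod L)) + 1 = r + n + (((t : ℕ) + 1 : ℕ) : ZMod L) := by
        push_cast; ring
      have h2 : r + (n + (t : ZMod L)) = r + n + (t : ZMod L) := by ring
      have h3 : n + (t : ZMod L) + 1 = n + (((t : ℕ) + 1 : ℕ) : ZMod L) := by
        push_cast; ring
      rw [h1, h2, h3]
      have h4 : p + w (r + n + (t : ZMod L)) - w (r + n)
            + (w (r + n + (((t : ℕ) + 1 : ℕ) : ZMod L)) - w (r + n + (t : ZMod L)))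
          = p + w (r + n + (((t : ℕ) + 1 : ℕ) : ZMod L)) - w (r + n) := by abel
      rw [h4]

include hwG hadj

/-- If the run is matched forever, then the hypothesis was correct and the orbit
covers `G`. -/
lemma matched_forever_cov (hfin : G.Finite)
    (hsurj : ∀ g ∈ G, ∃ k, w k = g)
    (p : Fin d → ℤ) (hp : p ∈ G) (r n : ZMod L)
    (h : ∀ t : ℕ, sense G 1 (p + w (r + n + (t : ZMod L)) - w (r + n))
        = sense G 1 (w (r + n + (t : ZMod L)))) :
    MCov G w (p, (r, n, true)) := by
  have horb : ∀ t : ℕ, (morb G w (p, (r, n, true)) t).1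
      = p + w (r + n + (t : ZMod L)) - w (r + n) := by
    intro t
    rw [matched_prefix p r n t (fun t' _ => h t')]
  have hmem : ∀ t : ℕ, p + w (r + n + (t : ZMod L)) - w (r + n) ∈ G := by
    intro t
    rw [← horb t]
    exact morb_mem hwG hadj _ hp t
  have hshift : ∀ g ∈ G, g + (p - w (r + n)) ∈ G := by
    intro g hg
    obtain ⟨k, rfl⟩ := hsurj g hg
    have := hmem ((k - (r + n)).val)
    have hk : r + n + (((k - (r + n)).val : ℕ) : ZMod L) = k := by
      rw [ZMod.natCast_rightInverse (k - (r + n))]; ring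
    rw [hk] at this
    have he : w k + (p - w (r + n)) = p + w k - w (r + n) := by abel
    rw [he]; exact this
  have hv : p - w (r + n) = 0 :=
    shift_eq_zero hfin ⟨p, hp⟩ hshift
  intro g hg
  obtain ⟨k, rfl⟩ := hsurj g hg
  refine ⟨((k - (r + n)).val), ?_⟩
  rw [horb]
  have hk : r + n + (((k - (r + n)).val : ℕ) : ZMod L) = k := by
    rw [ZMod.natCast_rightInverse (k - (r + n))]; ring
  rw [hk]
  have : p - w (r + n) = 0 := hv
  have hpw : p = w (r + n) := by
    have := sub_eq_zero.mp hv; exact this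
  rw [hpw]; abel

/-- Backtracking always terminates in a fresh probe state. -/
lemma back_terminates (p : Fin d → ℤ) (hp : p ∈ G) (r i : ZMod L) :
    ∃ T : ℕ, ∃ p' : Fin d → ℤ, p' ∈ G ∧
      morb G w (p, (r, i, false)) T = (p', (r + 1, 0, true)) := by
  suffices H : ∀ m : ℕ, ∀ p : Fin d → ℤ, p ∈ G → ∀ i : ZMod L, i.val = m →
      ∃ T : ℕ, ∃ p' : Fin d → ℤ, p' ∈ G ∧
        morb G w (p, (r, i, false)) T = (p', (r + 1, 0, true)) by
    exact H i.val p hp i rfl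
  intro m
  induction m using Nat.strong_induction_on with
  | _ m ih =>
  intro p hp i hi
  subst hi
  by_cases h0 : i = 0
  · refine ⟨1, p, hp, ?_⟩
    show (p + (mstep G w (sense G 1 p) (r, i, false)).1,
      (mstep G w (sense G 1 p) (r, i, false)).2) = _
    simp only [mstep, if_pos h0]
    simp
  · by_cases hmem : (w (r + i - 1) - w (r + i)) ∈ sense G 1 p
    · have hstep : morb G w (p, (r, i, false)) 1
          = (p + (w (r + i - 1) - w (r + i)), (r, i - 1, false)) := by
        show (p + (mstep G w (sense G 1 p) (r, i, false)).1,
          (mstep G w (sense G 1 p) (r, i, false)).2) = _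
        simp only [mstep, if_neg h0, if_pos hmem]
      have hval : (i - 1).val < i.val := by
        rw [zmod_val_sub_one i h0]
        have : 1 ≤ i.val := Nat.one_le_iff_ne_zero.mpr
          (fun hc => h0 ((ZMod.val_eq_zero i).mp hc))
        omega
      obtain ⟨T, p', hp', hT⟩ := ih (i - 1).val hval (p + (w (r + i - 1) - w (r + i)))
        hmem.1 (i - 1) rfl
      refine ⟨1 + T, p', hp', ?_⟩
      rw [morb_add, hstep, hT]
    · refine ⟨1, p, hp, ?_⟩
      show (p + (mstep G w (sense G 1 p) (r, i, false)).1,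
        (mstep G w (sense G 1 p) (r, i, false)).2) = _
      simp only [mstep, if_neg h0, if_neg hmem]
      simp

end MachineMain
section MachineMain2

open scoped Classical

variable {d : ℕ} {G : Set (Fin d → ℤ)} {L : ℕ} [NeZero L] {w : ZMod L → (Fin d → ℤ)}

lemma zmod_val_sub_cast {L : ℕ} [NeZero L] (a : ZMod L) (j : ℕ) (h : j ≤ a.val) :
    (a - (j : ZMod L)).val = a.val - j := by
  have hlt : a.val - j < L := lt_of_le_of_lt (Nat.sub_le _ _) (ZMod.val_lt a)
  have key : ((a.val - j : ℕ) : ZMod L) = a - (j : ZMod L) := by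
    have ha : ((a.val : ℕ) : ZMod L) = a := ZMod.natCast_rightInverse a
    push_cast [h]
    rw [ha]
  rw [← key, ZMod.val_cast_of_lt hlt]

/-- At the first mismatch the machine switches to backtrack mode. -/
lemma mismatch_step (p : Fin d → ℤ) (r n : ZMod L) (t₀ : ℕ)
    (hmin : ∀ t' : ℕ, t' < t₀ → sense G 1 (p + w (r + n + (t' : ZMod L)) - w (r + n))
        = sense G 1 (w (r + n + (t' : ZMod L))))
    (hmis : ¬ (sense G 1 (p + w (r + n + (t₀ : ZMod L)) - w (r + n))
        = sense G 1 (w (r + n + (t₀ : ZMod L))))) :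
    morb G w (p, (r, n, true)) (t₀ + 1)
      = (p + w (r + n + (t₀ : ZMod L)) - w (r + n), (r, n + (t₀ : ZMod L), false)) := by
  have hA := matched_prefix (w := w) p r n t₀ hmin
  show (let y := morb G w (p, (r, n, true)) t₀;
    (y.1 + (mstep G w (sense G 1 y.1) y.2).1, (mstep G w (sense G 1 y.1) y.2).2)) = _
  rw [hA]
  have hcond : ¬ (sense G 1 (p + w (r + n + (t₀ : ZMod L)) - w (r + n))
      = sense G 1 (w (r + (n + (t₀ : ZMod L))))) := by
    rw [← add_assoc]; exact hmis
  simp only [mstep, if_neg hcond]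
  simp

variable (hwG : ∀ k, w k ∈ G) (hadj : ∀ k, manhattan (w (k + 1) - w k) ≤ 1)

include hwG hadj

/-- A probe round from base `p` with hypothesis `r` either covers `G` or returns to
base with the next hypothesis. -/
lemma probe_round (hfin : G.Finite) (hsurj : ∀ g ∈ G, ∃ k, w k = g)
    (p : Fin d → ℤ) (hp : p ∈ G) (r : ZMod L) :
    MCov G w (p, (r, 0, true)) ∨
      ∃ T : ℕ, morb G w (p, (r, 0, true)) T = (p, (r + 1, 0, true)) := by
  by_cases hall : ∀ t : ℕ, sense G 1 (p + w (r + 0 + (t : ZMod L)) - w (r + 0))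
      = sense G 1 (w (r + 0 + (t : ZMod L)))
  · exact Or.inl (matched_forever_cov hwG hadj hfin hsurj p hp r 0 hall)
  · right
    push_neg at hall
    have hex : ∃ t : ℕ, ¬ (sense G 1 (p + w (r + 0 + (t : ZMod L)) - w (r + 0))
        = sense G 1 (w (r + 0 + (t : ZMod L)))) := hall
    set t₀ := Nat.find hex with ht₀
    have hmis := Nat.find_spec hex
    have hmin : ∀ t' : ℕ, t' < t₀ → sense G 1 (p + w (r + 0 + (t' : ZMod L)) - w (r + 0))
        = sense G 1 (w (r + 0 + (t' : ZMod L))) := by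
      intro t' ht'
      by_contra hc
      exact Nat.find_min hex ht' hc
    have hmem : ∀ t : ℕ, t ≤ t₀ → p + w (r + (t : ZMod L)) - w r ∈ G := by
      intro t ht
      have := matched_prefix (w := w) p r 0 t (fun t' ht' => hmin t' (lt_of_lt_of_le ht' ht))
      have hm := morb_mem hwG hadj (p, (r, 0, true)) hp t
      rw [this] at hm
      simpa [add_zero] using hm
    have hstep := mismatch_step (w := w) p r 0 t₀ hmin hmis
    have hvle : ((t₀ : ZMod L)).val ≤ t₀ := by
      rw [ZMod.val_natCast]; exact Nat.mod_le _ _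
    have claim : ∀ j : ℕ, j ≤ ((t₀ : ZMod L)).val →
        morb G w (p, (r, 0, true)) (t₀ + 1 + j)
          = (p + w (r + ((t₀ - j : ℕ) : ZMod L)) - w r,
             (r, (t₀ : ZMod L) - (j : ZMod L), false)) := by
      intro j
      induction j with
      | zero =>
          intro _
          simpa [add_zero] using hstep
      | succ j ihj =>
          intro hj1
          have hj : j ≤ ((t₀ : ZMod L)).val := Nat.le_of_succ_le hj1
          have hjt : j ≤ t₀ := le_trans hj hvle
          have hj1t : j + 1 ≤ t₀ := le_trans hj1 hvle
          have ihh := ihj hj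
          show (let y := morb G w (p, (r, 0, true)) (t₀ + 1 + j);
            (y.1 + (mstep G w (sense G 1 y.1) y.2).1,
             (mstep G w (sense G 1 y.1) y.2).2)) = _
          rw [ihh]
          have hi0 : (t₀ : ZMod L) - (j : ZMod L) ≠ 0 := by
            intro hc
            have := zmod_val_sub_cast (t₀ : ZMod L) j hj
            rw [hc, ZMod.val_zero] at this
            omega
          -- index identities
          have hidx1 : r + ((t₀ : ZMod L) - (j : ZMod L)) = r + ((t₀ - j : ℕ) : ZMod L) := by
            have : ((t₀ - j : ℕ) : ZMod L) = (t₀ : ZMod L) - (j : ZMod L) := by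
              push_cast [hjt]; ring
            rw [this]
          have hidx2 : r + ((t₀ : ZMod L) - (j : ZMod L)) - 1
              = r + ((t₀ - (j + 1) : ℕ) : ZMod L) := by
            have : ((t₀ - (j + 1) : ℕ) : ZMod L)
                = (t₀ : ZMod L) - (j : ZMod L) - 1 := by
              push_cast [hj1t]; ring
            rw [this]; ring
          have hsucc : r + ((t₀ - (j+1) : ℕ) : ZMod L) + 1 = r + ((t₀ - j : ℕ) : ZMod L) := by
            have : ((t₀ - j : ℕ) : ZMod L) = ((t₀ - (j+1) : ℕ) : ZMod L) + 1 := by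
              push_cast [hjt, hj1t]; ring
            rw [this]; ring
          have hmem' : (w (r + ((t₀ : ZMod L) - (j : ZMod L)) - 1)
                - w (r + ((t₀ : ZMod L) - (j : ZMod L))))
              ∈ sense G 1 (p + w (r + ((t₀ - j : ℕ) : ZMod L)) - w r) := by
            rw [hidx2, hidx1]
            constructor
            · have he : p + w (r + ((t₀ - j : ℕ) : ZMod L)) - w r
                  + (w (r + ((t₀ - (j+1) : ℕ) : ZMod L)) - w (r + ((t₀ - j : ℕ) : ZMod L)))
                  = p + w (r + ((t₀ - (j+1) : ℕ) : ZMod L)) - w r := by abel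
              show p + w (r + ((t₀ - j : ℕ) : ZMod L)) - w r
                  + (w (r + ((t₀ - (j+1) : ℕ) : ZMod L)) - w (r + ((t₀ - j : ℕ) : ZMod L))) ∈ G
              rw [he]
              exact hmem _ (le_trans (Nat.sub_le _ _) (le_refl t₀))
            · have hm : manhattan (w (r + ((t₀ - (j+1) : ℕ) : ZMod L))
                  - w (r + ((t₀ - j : ℕ) : ZMod L)))
                  = manhattan (w (r + ((t₀ - (j+1) : ℕ) : ZMod L) + 1)
                    - w (r + ((t₀ - (j+1) : ℕ) : ZMod L))) := by
                rw [hsucc]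
                exact manhattan_sub_comm _ _
              rw [hm]
              simpa using hadj _
          simp only [mstep, if_neg hi0, if_pos hmem']
          refine Prod.ext ?_ (Prod.ext rfl ?_)
          · show p + w (r + ((t₀ - j : ℕ) : ZMod L)) - w r
                + (w (r + ((t₀ : ZMod L) - (j : ZMod L)) - 1)
                  - w (r + ((t₀ : ZMod L) - (j : ZMod L))))
              = p + w (r + ((t₀ - (j+1) : ℕ) : ZMod L)) - w r
            rw [hidx2, hidx1]; abel
          · show (r, (t₀ : ZMod L) - (j : ZMod L) - 1, false).2
                = (r, (t₀ : ZMod L) - ((j+1 : ℕ) : ZMod L), false).2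
            have : (t₀ : ZMod L) - (j : ZMod L) - 1
                = (t₀ : ZMod L) - ((j+1 : ℕ) : ZMod L) := by push_cast; ring
            rw [this]
    have hfinal := claim ((t₀ : ZMod L)).val (le_refl _)
    have hzero : ((t₀ - ((t₀ : ZMod L)).val : ℕ) : ZMod L) = 0 := by
      have hcv : ((((t₀ : ZMod L)).val : ℕ) : ZMod L) = (t₀ : ZMod L) :=
        ZMod.natCast_rightInverse _
      push_cast [hvle]
      rw [hcv]; ring
    have hzero2 : (t₀ : ZMod L) - ((((t₀ : ZMod L)).val : ℕ) : ZMod L) = 0 := by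
      rw [ZMod.natCast_rightInverse _]; ring
    rw [hzero, hzero2] at hfinal
    have hpos : p + w (r + 0) - w r = p := by simp
    rw [hpos] at hfinal
    refine ⟨t₀ + 1 + ((t₀ : ZMod L)).val + 1, ?_⟩
    rw [show t₀ + 1 + ((t₀ : ZMod L)).val + 1 = (t₀ + 1 + ((t₀ : ZMod L)).val) + 1 from rfl]
    show (let y := morb G w (p, (r, 0, true)) (t₀ + 1 + ((t₀ : ZMod L)).val);
      (y.1 + (mstep G w (sense G 1 y.1) y.2).1, (mstep G w (sense G 1 y.1) y.2).2)) = _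
    rw [hfinal]
    simp only [mstep, if_pos rfl]
    simp

/-- From any starting state the machine either covers `G` or reaches a fresh probe
state. -/
lemma reach_probe0 (p : Fin d → ℤ) (hp : p ∈ G)
    (σ : ZMod L × ZMod L × Bool) (hfin : G.Finite) (hsurj : ∀ g ∈ G, ∃ k, w k = g) :
    MCov G w (p, σ) ∨ ∃ T : ℕ, ∃ p' : Fin d → ℤ, ∃ r' : ZMod L, p' ∈ G ∧
      morb G w (p, σ) T = (p', (r', 0, true)) := by
  obtain ⟨r, n, mode⟩ := σ
  cases mode with
  | false =>
      obtain ⟨T, p', hp', hT⟩ := back_terminates hwG hadj p hp r n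
      exact Or.inr ⟨T, p', r + 1, hp', hT⟩
  | true =>
      by_cases hall : ∀ t : ℕ, sense G 1 (p + w (r + n + (t : ZMod L)) - w (r + n))
          = sense G 1 (w (r + n + (t : ZMod L)))
      · exact Or.inl (matched_forever_cov hwG hadj hfin hsurj p hp r n hall)
      · right
        push_neg at hall
        have hex : ∃ t : ℕ, ¬ (sense G 1 (p + w (r + n + (t : ZMod L)) - w (r + n))
            = sense G 1 (w (r + n + (t : ZMod L)))) := hall
        set t₀ := Nat.find hex
        have hmis := Nat.find_spec hex
        have hmin : ∀ t' : ℕ, t' < t₀ →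
            sense G 1 (p + w (r + n + (t' : ZMod L)) - w (r + n))
            = sense G 1 (w (r + n + (t' : ZMod L))) := by
          intro t' ht'
          by_contra hc
          exact Nat.find_min hex ht' hc
        have hstep := mismatch_step (w := w) p r n t₀ hmin hmis
        have hpmem : p + w (r + n + (t₀ : ZMod L)) - w (r + n) ∈ G := by
          have hm := morb_mem hwG hadj (p, (r, n, true)) hp (t₀ + 1)
          rw [hstep] at hm
          exact hm
        obtain ⟨T, p', hp', hT⟩ := back_terminates hwG hadj _ hpmem r (n + (t₀ : ZMod L))
        refine ⟨(t₀ + 1) + T, p', r + 1, hp', ?_⟩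
        rw [morb_add, hstep, hT]

/-- From a fresh probe state the machine covers `G`. -/
lemma cov_probe0 (hfin : G.Finite) (hsurj : ∀ g ∈ G, ∃ k, w k = g)
    (p : Fin d → ℤ) (hp : p ∈ G) (r : ZMod L) :
    MCov G w (p, (r, 0, true)) := by
  obtain ⟨rs, hrs⟩ := hsurj p hp
  suffices H : ∀ m : ℕ, ∀ r : ZMod L, (rs - r).val = m → MCov G w (p, (r, 0, true)) by
    exact H (rs - r).val r rfl
  intro m
  induction m using Nat.strong_induction_on with
  | _ m ih =>
  intro r hm
  by_cases hr : rs = r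
  · subst hr
    apply matched_forever_cov hwG hadj hfin hsurj p hp rs 0
    intro t
    have hpw : p + w (rs + 0 + (t : ZMod L)) - w (rs + 0) = w (rs + 0 + (t : ZMod L)) := by
      rw [add_zero, ← hrs]; abel
    rw [hpw]
  · rcases probe_round hwG hadj hfin hsurj p hp r with hcov | ⟨T, hT⟩
    · exact hcov
    · have hne : rs - r ≠ 0 := sub_ne_zero.mpr hr
      have hlt : (rs - (r + 1)).val < m := by
        have : rs - (r + 1) = (rs - r) - 1 := by ring
        rw [this, zmod_val_sub_one _ hne]
        have : 1 ≤ (rs - r).val := Nat.one_le_iff_ne_zero.mpr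
          (fun hc => hne ((ZMod.val_eq_zero _).mp hc))
        omega
      exact mcov_of_reach hT (ih _ hlt (r + 1) rfl)

/-- Every orbit of the machine covers `G`. -/
lemma mcov_all (hfin : G.Finite) (hsurj : ∀ g ∈ G, ∃ k, w k = g)
    (p : Fin d → ℤ) (hp : p ∈ G) (σ : ZMod L × ZMod L × Bool) :
    MCov G w (p, σ) := by
  rcases reach_probe0 hwG hadj p hp σ hfin hsurj with hcov | ⟨T, p', r', hp', hT⟩
  · exact hcov
  · exact mcov_of_reach hT (cov_probe0 hwG hadj hfin hsurj p' hp' r')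

end MachineMain2
section Tour

open scoped Classical

variable {d : ℕ}

/-- Existence of a short closed spanning tour of a finite connected lattice set. -/
lemma exists_tour {G : Set (Fin d → ℤ)} (hfin : G.Finite)
    (hconn : (latticeGraph G).Connected) (hnt : G.Nontrivial) :
    ∃ L : ℕ, 0 < L ∧ L ≤ 2 * (latticeGraph G).diam * Nat.card ↑G ∧
      ∃ w : ZMod L → (Fin d → ℤ),
        (∀ k, w k ∈ G) ∧ (∀ k, manhattan (w (k + 1) - w k) ≤ 1) ∧
        (∀ g ∈ G, ∃ k, w k = g) := by
  haveI : Fintype ↑G := hfin.fintype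
  haveI : Nonempty ↑G := hconn.nonempty
  set GG := latticeGraph G with hGG
  have hediam : GG.ediam ≠ ⊤ := by
    obtain ⟨u, v, huv⟩ := SimpleGraph.exists_edist_eq_ediam_of_finite (G := GG)
    rw [← huv]
    exact SimpleGraph.edist_ne_top_iff_reachable.mpr (hconn.preconnected u v)
  set D := GG.diam with hD
  obtain ⟨x₀⟩ := (inferInstance : Nonempty ↑G)
  have hP : ∀ y : ↑G, ∃ p : GG.Walk x₀ y, p.length = GG.dist x₀ y := fun y =>
    hconn.exists_walk_length_eq_dist x₀ y
  let P : ∀ y : ↑G, GG.Walk x₀ y := fun y => (hP y).choose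
  have hPlen : ∀ y, (P y).length ≤ D := by
    intro y
    rw [(hP y).choose_spec]
    exact SimpleGraph.dist_le_diam hediam
  let E : ↑G → GG.Walk x₀ x₀ := fun y => (P y).append (P y).reverse
  have hElen : ∀ y, (E y).length ≤ 2 * D := by
    intro y
    show ((P y).append (P y).reverse).length ≤ 2 * D
    rw [SimpleGraph.Walk.length_append, SimpleGraph.Walk.length_reverse]
    have := hPlen y
    omega
  let fold : List ↑G → GG.Walk x₀ x₀ := fun ll =>
    ll.foldr (fun y acc => (E y).append acc) SimpleGraph.Walk.nil
  have hfoldsup : ∀ (ll : List ↑G) (y : ↑G), y ∈ ll → y ∈ (fold ll).support := by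
    intro ll
    induction ll with
    | nil => intro y hy; simp at hy
    | cons a tl ih =>
        intro y hy
        show y ∈ ((E a).append (fold tl)).support
        rw [SimpleGraph.Walk.mem_support_append_iff]
        rcases List.mem_cons.mp hy with rfl | hy'
        · left
          show y ∈ ((P y).append (P y).reverse).support
          rw [SimpleGraph.Walk.mem_support_append_iff]
          exact Or.inl ((P y).end_mem_support)
        · exact Or.inr (ih y hy')
  have hfoldlen : ∀ ll : List ↑G, (fold ll).length ≤ ll.length * (2 * D) := by
    intro ll
    induction ll with
    | nil => simp [fold]
    | cons a tl ih =>
        show ((E a).append (fold tl)).length ≤ (tl.length + 1) * (2 * D)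
        rw [SimpleGraph.Walk.length_append]
        have := hElen a
        nlinarith
  let l : List ↑G := (Finset.univ : Finset ↑G).toList
  let W : GG.Walk x₀ x₀ := fold l
  set L := W.length with hL
  have hLpos : 0 < L := by
    rcases Nat.eq_zero_or_pos L with h | h
    · exfalso
      have hnil : W.Nil := SimpleGraph.Walk.nil_iff_length_eq.mpr h
      obtain ⟨y, hy, z, hz, hyz⟩ := hnt
      have hsup : ∀ u : ↑G, u ∈ W.support := fun u =>
        hfoldsup l u (Finset.mem_toList.mpr (Finset.mem_univ u))
      have hsupnil : W.support = [x₀] := SimpleGraph.Walk.nil_iff_support_eq.mp hnil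
      have h1 := hsup ⟨y, hy⟩
      have h2 := hsup ⟨z, hz⟩
      rw [hsupnil] at h1 h2
      simp only [List.mem_singleton] at h1 h2
      apply hyz
      have : (⟨y, hy⟩ : ↑G) = ⟨z, hz⟩ := by rw [h1, h2]
      exact congrArg Subtype.val this
    · exact h
  have hLle : L ≤ 2 * D * Nat.card ↑G := by
    have := hfoldlen l
    have hll : l.length = Fintype.card ↑G := by
      simp [l, Finset.length_toList]
    rw [Nat.card_eq_fintype_card]
    rw [hll] at this
    calc L ≤ Fintype.card ↑G * (2 * D) := this
      _ = 2 * D * Fintype.card ↑G := by ring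
  refine ⟨L, hLpos, hLle, ?_⟩
  haveI : NeZero L := ⟨hLpos.ne'⟩
  refine ⟨fun k => ↑(W.getVert k.val), fun k => (W.getVert k.val).2, ?_, ?_⟩
  · intro k
    have hkv : k.val < L := ZMod.val_lt k
    have hadjmh : ∀ i : ℕ, i < L →
        manhattan ((W.getVert (i + 1) : Fin d → ℤ) - (W.getVert i : Fin d → ℤ)) ≤ 1 := by
      intro i hi
      have hadj := W.adj_getVert_succ hi
      have : manhattan ((W.getVert i : Fin d → ℤ) - (W.getVert (i + 1) : Fin d → ℤ)) = 1 :=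
        hadj
      rw [manhattan_sub_comm] at this
      omega
    show manhattan ((W.getVert (k + 1).val : Fin d → ℤ) - (W.getVert k.val : Fin d → ℤ)) ≤ 1
    by_cases hcase : k.val + 1 < L
    · have hk1 : (k + 1).val = k.val + 1 := by
        have hk : ((k.val : ℕ) : ZMod L) = k := ZMod.natCast_rightInverse k
        have : k + 1 = ((k.val + 1 : ℕ) : ZMod L) := by push_cast; rw [hk]
        rw [this, ZMod.val_cast_of_lt hcase]
      rw [hk1]
      exact hadjmh k.val hkv
    · have hkL : k.val + 1 = L := by omega
      have hk1 : (k + 1).val = 0 := by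
        have hk : ((k.val : ℕ) : ZMod L) = k := ZMod.natCast_rightInverse k
        have : k + 1 = ((k.val + 1 : ℕ) : ZMod L) := by push_cast; rw [hk]
        rw [this, hkL, ZMod.natCast_self, ZMod.val_zero]
      rw [hk1]
      have hgv0 : W.getVert 0 = x₀ := W.getVert_zero
      have hgvL : W.getVert L = x₀ := W.getVert_length
      have hswap : W.getVert 0 = W.getVert (k.val + 1) := by
        rw [hgv0, show k.val + 1 = L from hkL, hgvL]
      rw [hswap]
      exact hadjmh k.val hkv
  · intro g hg
    have hmem : (⟨g, hg⟩ : ↑G) ∈ W.support :=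
      hfoldsup l ⟨g, hg⟩ (Finset.mem_toList.mpr (Finset.mem_univ _))
    obtain ⟨i, hgv, hi⟩ := SimpleGraph.Walk.mem_support_iff_exists_getVert.mp hmem
    by_cases hiL : i < L
    · refine ⟨(i : ZMod L), ?_⟩
      show (W.getVert ((i : ZMod L)).val : Fin d → ℤ) = g
      rw [ZMod.val_cast_of_lt hiL, hgv]
    · have hiL' : i = L := by omega
      refine ⟨0, ?_⟩
      show (W.getVert ((0 : ZMod L)).val : Fin d → ℤ) = g
      have hgv0 : W.getVert 0 = x₀ := W.getVert_zero
      have hgvL : W.getVert L = x₀ := W.getVert_length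
      have hkey : W.getVert 0 = (⟨g, hg⟩ : ↑G) := by
        calc W.getVert 0 = x₀ := hgv0
          _ = W.getVert L := hgvL.symm
          _ = W.getVert i := by rw [hiL']
          _ = ⟨g, hg⟩ := hgv
      rw [ZMod.val_zero, hkey]

end Tour
section CardBound

open scoped Classical

variable {d : ℕ}

/-- A finite connected lattice set has at most `(2d+1)^diam` points. -/
lemma card_le_pow_diam {G : Set (Fin d → ℤ)} (hfin : G.Finite)
    (hconn : (latticeGraph G).Connected) :
    Nat.card ↑G ≤ (2 * d + 1) ^ (latticeGraph G).diam := by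
  haveI : Fintype ↑G := hfin.fintype
  haveI : Nonempty ↑G := hconn.nonempty
  set GG := latticeGraph G with hGG
  have hediam : GG.ediam ≠ ⊤ := by
    obtain ⟨u, v, huv⟩ := SimpleGraph.exists_edist_eq_ediam_of_finite (G := GG)
    rw [← huv]
    exact SimpleGraph.edist_ne_top_iff_reachable.mpr (hconn.preconnected u v)
  set D := GG.diam with hD
  obtain ⟨x₀⟩ := (inferInstance : Nonempty ↑G)
  have hP : ∀ y : ↑G, ∃ p : GG.Walk x₀ y, p.length = GG.dist x₀ y := fun y =>
    hconn.exists_walk_length_eq_dist x₀ y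
  let P : ∀ y : ↑G, GG.Walk x₀ y := fun y => (hP y).choose
  have hPlen : ∀ y, (P y).length ≤ D := by
    intro y
    rw [(hP y).choose_spec]
    exact SimpleGraph.dist_le_diam hediam
  let decOpt : Option (Fin d × Bool) → (Fin d → ℤ) := fun o =>
    o.elim 0 (fun ib => Pi.single ib.1 (if ib.2 then 1 else -1))
  let optEnc : (Fin d → ℤ) → Option (Fin d × Bool) := fun s =>
    if h : ∃ o, decOpt o = s then h.choose else none
  have hdec : ∀ s : Fin d → ℤ, manhattan s ≤ 1 → decOpt (optEnc s) = s := by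
    intro s hs
    have hex : ∃ o, decOpt o = s := by
      rcases exists_dec_of_manhattan_le_one hs with rfl | ⟨i, rfl | rfl⟩
      · exact ⟨none, rfl⟩
      · exact ⟨some (i, true), by simp [decOpt]⟩
      · exact ⟨some (i, false), by simp [decOpt]⟩
    show decOpt (if h : ∃ o, decOpt o = s then h.choose else none) = s
    rw [dif_pos hex]
    exact hex.choose_spec
  let stepf : ↑G → ℕ → (Fin d → ℤ) := fun y i =>
    ((P y).getVert (i + 1) : Fin d → ℤ) - ((P y).getVert i : Fin d → ℤ)
  have hstep : ∀ y i, manhattan (stepf y i) ≤ 1 := by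
    intro y i
    by_cases hi : i < (P y).length
    · have hadj := (P y).adj_getVert_succ hi
      have h1 : manhattan (((P y).getVert i : Fin d → ℤ)
          - ((P y).getVert (i + 1) : Fin d → ℤ)) = 1 := hadj
      rw [manhattan_sub_comm] at h1
      exact le_of_eq h1
    · have h1 : (P y).getVert i = y := (P y).getVert_of_length_le (by omega)
      have h2 : (P y).getVert (i + 1) = y := (P y).getVert_of_length_le (by omega)
      show manhattan (((P y).getVert (i+1) : Fin d → ℤ) - ((P y).getVert i : Fin d → ℤ)) ≤ 1
      rw [h1, h2, sub_self, manhattan_zero]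
      norm_num
  have hsum : ∀ y : ↑G, (y : Fin d → ℤ) = (x₀ : Fin d → ℤ) + ∑ i ∈ Finset.range D, stepf y i := by
    intro y
    have htel : ∑ i ∈ Finset.range D,
        (((P y).getVert (i + 1) : Fin d → ℤ) - ((P y).getVert i : Fin d → ℤ))
        = ((P y).getVert D : Fin d → ℤ) - ((P y).getVert 0 : Fin d → ℤ) :=
      Finset.sum_range_sub (fun i => ((P y).getVert i : Fin d → ℤ)) D
    have hD1 : (P y).getVert D = y := (P y).getVert_of_length_le (hPlen y)
    have hD0 : (P y).getVert 0 = x₀ := (P y).getVert_zero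
    show (y : Fin d → ℤ) = (x₀ : Fin d → ℤ) + ∑ i ∈ Finset.range D, stepf y i
    rw [show ∑ i ∈ Finset.range D, stepf y i
        = ∑ i ∈ Finset.range D,
          (((P y).getVert (i + 1) : Fin d → ℤ) - ((P y).getVert i : Fin d → ℤ)) from rfl,
      htel, hD1, hD0]
    abel
  let Φ : ↑G → (Fin D → Option (Fin d × Bool)) := fun y j => optEnc (stepf y j.val)
  have hΦ : Function.Injective Φ := by
    intro y y' hyy
    have hsteps : ∀ j : Fin D, stepf y j.val = stepf y' j.val := by
      intro j
      have := congrFun hyy j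
      calc stepf y j.val = decOpt (optEnc (stepf y j.val)) := (hdec _ (hstep y j.val)).symm
        _ = decOpt (optEnc (stepf y' j.val)) := by rw [show optEnc (stepf y j.val) = optEnc (stepf y' j.val) from this]
        _ = stepf y' j.val := hdec _ (hstep y' j.val)
    have hsum' : ∑ i ∈ Finset.range D, stepf y i = ∑ i ∈ Finset.range D, stepf y' i := by
      apply Finset.sum_congr rfl
      intro i hi
      have hiD : i < D := Finset.mem_range.mp hi
      exact hsteps ⟨i, hiD⟩
    have : (y : Fin d → ℤ) = (y' : Fin d → ℤ) := by
      rw [hsum y, hsum y', hsum']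
    exact Subtype.ext this
  have hcard := Fintype.card_le_of_injective Φ hΦ
  have hcodom : Fintype.card (Fin D → Option (Fin d × Bool)) = (2 * d + 1) ^ D := by
    rw [Fintype.card_fun]
    congr 1
    · rw [Fintype.card_option, Fintype.card_prod, Fintype.card_fin, Fintype.card_bool]
      ring
    · exact Fintype.card_fin D
  rw [Nat.card_eq_fintype_card]
  rw [hcodom] at hcard
  exact hcard

end CardBound
/-- There is a constant `C > 0` such that for every `d ≥ 1` and
every finite connected `G ⊆ ℤ^d`, there is an agent algorithm with sensing range
`V = 1`, at most `C · diam(G) · log₂(2d)` bits of memory, and steps of Manhattan norm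
at most 1 (the agent may stay in place), that patrols `G`. -/
theorem patrol_general_subgraph_diam_log_bits :
    ∃ C : ℝ, 0 < C ∧ ∀ d : ℕ, 1 ≤ d → ∀ G : Set (Fin d → ℤ),
      G.Finite → (latticeGraph G).Connected →
      ∃ b : ℕ, (b : ℝ) ≤ C * (latticeGraph G).diam * Real.logb 2 (2 * d) ∧
        ∃ A : Agent d b, A.PatrolsLazy G 1 := by
  classical
  refine ⟨18, by norm_num, ?_⟩
  intro d hd G hfin hconn
  have hlogpos : (0:ℝ) ≤ Real.logb 2 (2 * d) := by
    apply Real.logb_nonneg (by norm_num)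
    have : (1:ℝ) ≤ (d:ℝ) := by exact_mod_cast hd
    linarith
  by_cases hsing : G.Subsingleton
  · -- trivial agent for a subsingleton set
    refine ⟨0, ?_, ⟨⟨fun _ m => (0, m)⟩, ?_, ?_⟩⟩
    · push_cast
      have : (0:ℝ) ≤ ((latticeGraph G).diam : ℝ) := Nat.cast_nonneg _
      nlinarith
    · intro p hp m
      constructor
      · rw [manhattan_zero]; norm_num
      · simpa using hp
    · intro v₁ h₁ m v hv
      exact ⟨0, (hsing h₁ hv)⟩
  · have hnt : G.Nontrivial := Set.not_subsingleton_iff.mp hsing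
    -- basic quantities
    set D := (latticeGraph G).diam with hDdef
    have hediam : (latticeGraph G).ediam ≠ ⊤ := by
      haveI : Fintype ↑G := hfin.fintype
      haveI : Nonempty ↑G := hconn.nonempty
      obtain ⟨u, v, huv⟩ := SimpleGraph.exists_edist_eq_ediam_of_finite (G := latticeGraph G)
      rw [← huv]
      exact SimpleGraph.edist_ne_top_iff_reachable.mpr (hconn.preconnected u v)
    have hD1 : 1 ≤ D := by
      rcases Nat.eq_zero_or_pos D with h0 | h1
      · exfalso
        rcases SimpleGraph.diam_eq_zero.mp h0 with h | h
        · exact hediam h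
        · haveI := h
          exact hsing (fun x hx y hy => congrArg Subtype.val (Subsingleton.elim
            (⟨x, hx⟩ : ↑G) ⟨y, hy⟩))
      · exact h1
    set M := Nat.card ↑G with hMdef
    have hM : M ≤ (2 * d + 1) ^ D := card_le_pow_diam hfin hconn
    obtain ⟨L, hL0, hLle, w, hwG, hadjw, hsurj⟩ := exists_tour hfin hconn hnt
    haveI : NeZero L := ⟨hL0.ne'⟩
    set K := Nat.log 2 (2 * d) + 1 with hKdef
    set b := 9 * D * K with hbdef
    -- numeric bounds
    have hK1 : 1 ≤ K := by omega
    have h2dK : 2 * d ≤ 2 ^ K := le_of_lt (Nat.lt_pow_succ_log_self (by norm_num) (2 * d))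
    have h2K : 2 ≤ 2 ^ K := by omega
    have hM2 : M ≤ 2 ^ (2 * K * D) := by
      calc M ≤ (2 * d + 1) ^ D := hM
        _ ≤ (2 ^ K * 2 ^ K) ^ D := Nat.pow_le_pow_left (by nlinarith) D
        _ = 2 ^ (2 * K * D) := by rw [← pow_add, ← pow_mul]; ring_nf
    have hDpow : D ≤ 2 ^ (K * D) := by
      calc D ≤ 2 ^ D := le_of_lt (Nat.lt_two_pow_self (n := D))
        _ ≤ 2 ^ (K * D) := Nat.pow_le_pow_right (by norm_num) (by nlinarith)
    have hL4 : L ≤ 2 ^ (4 * K * D) := by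
      calc L ≤ 2 * D * M := hLle
        _ ≤ 2 ^ K * 2 ^ (K * D) * 2 ^ (2 * K * D) := by
            apply Nat.mul_le_mul
            apply Nat.mul_le_mul h2K hDpow
            exact hM2
        _ = 2 ^ (K + K * D + 2 * K * D) := by rw [← pow_add, ← pow_add]
        _ ≤ 2 ^ (4 * K * D) := Nat.pow_le_pow_right (by norm_num) (by nlinarith)
    have hstates : 2 * L ^ 2 ≤ 2 ^ b := by
      calc 2 * L ^ 2 ≤ 2 ^ K * (2 ^ (4 * K * D)) ^ 2 := by
            apply Nat.mul_le_mul h2K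
            exact Nat.pow_le_pow_left hL4 2
        _ = 2 ^ (K + 4 * K * D * 2) := by rw [← pow_mul, ← pow_add]
        _ ≤ 2 ^ (9 * D * K) := Nat.pow_le_pow_right (by norm_num) (by nlinarith)
        _ = 2 ^ b := by rw [hbdef]
    -- the real bound on b
    have hlogb1 : (1:ℝ) ≤ Real.logb 2 (2 * d) := by
      have h2 : Real.logb 2 2 = 1 := Real.logb_self_eq_one (by norm_num)
      rw [← h2]
      apply Real.logb_le_logb_of_le (by norm_num) (by norm_num)
      have : (1:ℝ) ≤ (d:ℝ) := by exact_mod_cast hd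
      linarith
    have hlogb2 : (Nat.log 2 (2 * d) : ℝ) ≤ Real.logb 2 (2 * d) := by
      have hpow : ((2:ℝ)) ^ (Nat.log 2 (2 * d)) ≤ 2 * (d:ℝ) := by
        have := Nat.pow_log_le_self 2 (x := 2 * d) (by omega)
        exact_mod_cast this
      have heq : Real.logb 2 ((2:ℝ) ^ (Nat.log 2 (2 * d))) = (Nat.log 2 (2 * d) : ℝ) := by
        rw [Real.logb_pow, Real.logb_self_eq_one (by norm_num)]
        ring
      rw [← heq]
      apply Real.logb_le_logb_of_le (by norm_num) (pow_pos (by norm_num) _) hpow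
    have hbre : (b : ℝ) ≤ 18 * D * Real.logb 2 (2 * d) := by
      have hKre : (K : ℝ) ≤ 2 * Real.logb 2 (2 * d) := by
        rw [hKdef]
        push_cast
        linarith
      have hbeq : (b : ℝ) = 9 * (D : ℝ) * (K : ℝ) := by rw [hbdef]; push_cast; ring
      rw [hbeq]
      have hDre : (0:ℝ) ≤ 9 * (D : ℝ) := by positivity
      calc 9 * (D : ℝ) * (K : ℝ) ≤ 9 * (D : ℝ) * (2 * Real.logb 2 (2 * d)) :=
            mul_le_mul_of_nonneg_left hKre hDre
        _ = 18 * D * Real.logb 2 (2 * d) := by ring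
    refine ⟨b, by exact_mod_cast hbre, ?_⟩
    -- memory encoding
    have hcard : Fintype.card (ZMod L × ZMod L × Bool) ≤ Fintype.card (Fin b → Bool) := by
      simp only [Fintype.card_prod, ZMod.card, Fintype.card_bool, Fintype.card_fun,
        Fintype.card_fin]
      calc L * (L * 2) = 2 * L ^ 2 := by ring
        _ ≤ 2 ^ b := hstates
    obtain ⟨e⟩ := Function.Embedding.nonempty_of_card_le hcard
    let dec : (Fin b → Bool) → ZMod L × ZMod L × Bool := fun m =>
      if h : ∃ σ, e σ = m then h.choose else (0, 0, true)
    have hde : ∀ σ, dec (e σ) = σ := by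
      intro σ
      have hex : ∃ σ', e σ' = e σ := ⟨σ, rfl⟩
      show (if h : ∃ σ', e σ' = e σ then h.choose else (0, 0, true)) = σ
      rw [dif_pos hex]
      exact e.injective hex.choose_spec
    refine ⟨⟨fun S m => ((mstep G w S (dec m)).1, e (mstep G w S (dec m)).2)⟩, ?_, ?_⟩
    · intro p hp m
      exact mstep_valid hwG hadjw p hp (dec m)
    · intro v₁ h₁ m v hv
      set A : Agent d b := ⟨fun S m => ((mstep G w S (dec m)).1, e (mstep G w S (dec m)).2)⟩
        with hA
      have hsim : ∀ t, (A.traj G 1 v₁ m t).1 = (morb G w (v₁, dec m) t).1 ∧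
          dec (A.traj G 1 v₁ m t).2 = (morb G w (v₁, dec m) t).2 := by
        intro t
        induction t with
        | zero => exact ⟨rfl, rfl⟩
        | succ t ih =>
            obtain ⟨h1, h2⟩ := ih
            constructor
            · show (A.traj G 1 v₁ m t).1
                  + (A.act (sense G 1 (A.traj G 1 v₁ m t).1) (A.traj G 1 v₁ m t).2).1
                = (morb G w (v₁, dec m) t).1
                  + (mstep G w (sense G 1 (morb G w (v₁, dec m) t).1)
                      (morb G w (v₁, dec m) t).2).1
              rw [h1]
              show (morb G w (v₁, dec m) t).1
                  + (mstep G w (sense G 1 (morb G w (v₁, dec m) t).1)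
                      (dec (A.traj G 1 v₁ m t).2)).1 = _
              rw [h2]
            · show dec (e (mstep G w (sense G 1 (A.traj G 1 v₁ m t).1)
                  (dec (A.traj G 1 v₁ m t).2)).2)
                = (mstep G w (sense G 1 (morb G w (v₁, dec m) t).1)
                    (morb G w (v₁, dec m) t).2).2
              rw [hde, h1, h2]
      obtain ⟨t, ht⟩ := mcov_all hwG hadjw hfin hsurj v₁ h₁ (dec m) v hv
      exact ⟨t, by rw [(hsim t).1]; exact ht⟩
end

section
/- Let G ⊆ ℤ^d be a finite connected set with at least 3 points, regarded as a graph with edges between points at Manhattan distance 1, and let V ≥ 1. If some agent algorithm with 0 bits of memory and sensing range V patrols G, then G has a Hamiltonian cycle. -/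
open Finset

open SimpleGraph
lemma iterate_comm_apply {α : Type*} (f : α → α) (k : ℕ) (x : α) :
    f^[k] (f x) = f (f^[k] x) := by
  rw [← Function.iterate_succ_apply, Function.iterate_succ_apply']

def orbitWalk {α : Type*} (H : SimpleGraph α) (f : α → α)
    (hadj : ∀ v, H.Adj v (f v)) (v : α) : (k : ℕ) → H.Walk (f v) (f^[k + 1] v)
  | 0 => SimpleGraph.Walk.nil
  | k + 1 => ((orbitWalk H f hadj v k).concat (hadj (f^[k + 1] v))).copy rfl
      (Function.iterate_succ_apply' f (k + 1) v).symm

lemma orbitWalk_support {α : Type*} (H : SimpleGraph α) (f : α → α)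
    (hadj : ∀ v, H.Adj v (f v)) (v : α) (k : ℕ) :
    (orbitWalk H f hadj v k).support = (List.range (k + 1)).map (fun i => f^[i + 1] v) := by
  induction k with
  | zero => simp [orbitWalk]
  | succ k ih =>
    rw [orbitWalk, Walk.support_copy, Walk.support_concat, ih]
    simp [ih, List.range_succ, Function.iterate_succ_apply, iterate_comm_apply]

lemma orbitWalk_edges {α : Type*} (H : SimpleGraph α) (f : α → α)
    (hadj : ∀ v, H.Adj v (f v)) (v : α) (k : ℕ) :
    (orbitWalk H f hadj v k).edges
      = (List.range k).map (fun i => s(f^[i + 1] v, f^[i + 2] v)) := by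
  induction k with
  | zero => simp [orbitWalk]
  | succ k ih =>
    rw [orbitWalk, Walk.edges_copy, Walk.edges_concat, ih]
    simp [ih, List.range_succ, Function.iterate_succ_apply, iterate_comm_apply]

lemma ham_of_orbit {α : Type*} [Fintype α] [DecidableEq α] (H : SimpleGraph α)
    (f : α → α) (hadj : ∀ v, H.Adj v (f v))
    (horb : ∀ v w : α, ∃ t, f^[t] v = w) (hcard : 3 ≤ Fintype.card α) :
    ∃ (v : α) (c : H.Walk v v), c.IsHamiltonianCycle := by
  have hne : Nonempty α := Fintype.card_pos_iff.mp (by omega)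
  obtain ⟨v⟩ := hne
  have hsurj : Function.Surjective f := by
    intro w
    obtain ⟨t, ht⟩ := horb (f w) w
    exact ⟨f^[t] w, by
      rw [← iterate_comm_apply f t w, ht]⟩
  have hinj : Function.Injective f := Finite.injective_iff_surjective.mpr hsurj
  have hex : ∃ t, 0 < t ∧ f^[t] v = v := by
    obtain ⟨t, ht⟩ := horb (f v) v
    exact ⟨t + 1, Nat.succ_pos t, by rw [Function.iterate_succ_apply]; exact ht⟩
  set N := Nat.find hex with hNdef
  obtain ⟨hN0, hNv⟩ : 0 < N ∧ f^[N] v = v := Nat.find_spec hex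
  have hmin : ∀ k, 0 < k → k < N → f^[k] v ≠ v := fun k h1 h2 h3 =>
    Nat.find_min hex h2 ⟨h1, h3⟩
  have key : ∀ i j, i < j → j - i < N → f^[i] v ≠ f^[j] v := by
    intro i j hij hlt heq
    have hadd : i + (j - i) = j := by omega
    have h1 : f^[i] (f^[j - i] v) = f^[i] v := by
      rw [← Function.iterate_add_apply, hadd, ← heq]
    have h2 : f^[j - i] v = v := hinj.iterate i h1
    exact hmin (j - i) (by omega) hlt h2
  have hperiod : ∀ q, f^[N * q] v = v := fun q => by
    rw [Function.iterate_mul]; exact Function.iterate_fixed hNv q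
  have hsurj' : ∀ w, ∃ k, k < N ∧ f^[k + 1] v = w := by
    intro w
    obtain ⟨t, ht⟩ := horb v w
    have hmod : f^[t % N] v = w := by
      conv_rhs => rw [← ht, ← Nat.mod_add_div t N]
      rw [Function.iterate_add_apply, hperiod]
    rcases Nat.eq_zero_or_pos (t % N) with h0 | hpos
    · refine ⟨N - 1, by omega, ?_⟩
      rw [show N - 1 + 1 = N from by omega, hNv]
      rw [h0] at hmod
      simpa using hmod
    · have hlt : t % N < N := Nat.mod_lt t hN0
      refine ⟨t % N - 1, by omega, ?_⟩
      rw [show t % N - 1 + 1 = t % N from by omega]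
      exact hmod
  have hbij : Function.Bijective (fun k : Fin N => f^[(k : ℕ) + 1] v) := by
    constructor
    · intro a b hab
      by_contra hne
      have hne' : (a : ℕ) ≠ (b : ℕ) := fun h => hne (Fin.ext h)
      rcases lt_or_gt_of_ne hne' with h | h
      · exact key ((a : ℕ) + 1) ((b : ℕ) + 1) (by omega) (by omega) hab
      · exact key ((b : ℕ) + 1) ((a : ℕ) + 1) (by omega) (by omega) hab.symm
    · intro w
      obtain ⟨k, hk, hkw⟩ := hsurj' w
      exact ⟨⟨k, hk⟩, hkw⟩
  have hNcard : N = Fintype.card α := by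
    have := Fintype.card_of_bijective hbij
    simpa using this
  have hN3 : 3 ≤ N := by omega
  have hNN : N - 1 + 1 = N := by omega
  let p : H.Walk (f v) v := (orbitWalk H f hadj v (N - 1)).copy rfl (by rw [hNN]; exact hNv)
  have hsup : p.support = (List.range N).map (fun i => f^[i + 1] v) := by
    simp only [p, Walk.support_copy, orbitWalk_support, hNN]
  have hedg : p.edges = (List.range (N - 1)).map (fun i => s(f^[i + 1] v, f^[i + 2] v)) := by
    simp only [p, Walk.edges_copy, orbitWalk_edges]
  have hpath : p.IsPath := by
    rw [Walk.isPath_def, hsup]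
    refine List.Nodup.map_on ?_ (List.nodup_range (n := N))
    intro i hi j hj hij
    rw [List.mem_range] at hi hj
    by_contra hne
    rcases lt_or_gt_of_ne hne with h | h
    · exact key (i + 1) (j + 1) (by omega) (by omega) hij
    · exact key (j + 1) (i + 1) (by omega) (by omega) hij.symm
  have hedge_not : s(v, f v) ∉ p.edges := by
    rw [hedg]
    intro hmem
    simp only [List.mem_map, List.mem_range] at hmem
    obtain ⟨i, hi, heq⟩ := hmem
    rw [Sym2.eq_iff] at heq
    rcases heq with ⟨h1, h2⟩ | ⟨h1, h2⟩
    · exact hmin (i + 1) (by omega) (by omega) h1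
    · have hi2 : i + 2 = N := by
        by_contra h
        exact hmin (i + 2) (by omega) (by omega) h2
      refine key 1 (i + 1) (by omega) (by omega) ?_
      rw [Function.iterate_one]
      exact h1.symm
  refine ⟨v, Walk.cons (hadj v) p, ?_⟩
  rw [SimpleGraph.Walk.isHamiltonianCycle_iff_isCycle_and_support_count_tail_eq_one]
  constructor
  · rw [Walk.cons_isCycle_iff]
    exact ⟨hpath, hedge_not⟩
  · intro a
    rw [Walk.support_cons, List.tail_cons, hsup]
    obtain ⟨k, hk, hkw⟩ := hsurj' a
    refine List.count_eq_one_of_mem ?_ ?_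
    · rw [← hsup]; exact hpath.support_nodup
    · exact List.mem_map.mpr ⟨k, List.mem_range.mpr hk, hkw⟩

/-- Let `G ⊆ ℤ^d` be finite and connected with at least 3 points,
and let `V ≥ 1`. If some agent algorithm with `0` bits of memory and sensing range `V`
patrols `G`, then `G` has a Hamiltonian cycle. -/
theorem hamiltonian_of_zero_bit_patrol {d : ℕ} (hd : 1 ≤ d)
    (G : Set (Fin d → ℤ)) (hfin : G.Finite) (hcard : 3 ≤ G.ncard)
    (hconn : (latticeGraph G).Connected) (V : ℕ) (hV : 1 ≤ V)
    (A : Agent d 0) (hA : A.Patrols G V) :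
    ∃ (v : G) (c : (latticeGraph G).Walk v v), c.IsHamiltonianCycle := by
  classical
  haveI : Fintype G := hfin.fintype
  obtain ⟨hval, hpat⟩ := hA
  have hmuniq : ∀ m m' : Fin 0 → Bool, m = m' := fun m m' =>
    funext fun i => i.elim0
  set m₀ : Fin 0 → Bool := fun i => i.elim0 with hm₀
  let f : G → G := fun p => ⟨p.1 + (A.act (sense G V p.1) m₀).1,
    (hval p.1 p.2 m₀).2.1⟩
  have hadj : ∀ p : G, (latticeGraph G).Adj p (f p) := by
    intro p
    have h1 : (latticeGraph G).Adj (f p) p := by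
      show manhattan ((f p).1 - p.1) = 1
      simpa [f] using (hval p.1 p.2 m₀).1
    exact h1.symm
  have htraj : ∀ (w : G) (m : Fin 0 → Bool) (t : ℕ),
      (A.traj G V w.1 m t).1 = (f^[t] w).1 := by
    intro w m t
    induction t with
    | zero => rfl
    | succ t ih =>
      rw [Function.iterate_succ_apply']
      show (A.traj G V w.1 m t).1
          + (A.act (sense G V (A.traj G V w.1 m t).1) (A.traj G V w.1 m t).2).1
        = (f (f^[t] w)).1
      rw [hmuniq (A.traj G V w.1 m t).2 m₀, ih]
  have horb : ∀ v w : G, ∃ t, f^[t] v = w := by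
    intro v w
    obtain ⟨t, ht⟩ := hpat v.1 v.2 m₀ w.1 w.2
    exact ⟨t, Subtype.ext (by rw [← htraj v m₀ t]; exact ht)⟩
  have hcard' : 3 ≤ Fintype.card G := by
    rwa [← Nat.card_eq_fintype_card, Nat.card_coe_set_eq]
  exact ham_of_orbit (latticeGraph G) f hadj horb hcard'
end
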